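/- Let T : ℓ²(I) → H be the synthesis operator of a J-frame F = {f_i}_{i∈I} for a Krein space H, and let P₊ be the orthogonal projection of ℓ²(I) onto ℓ²(I₊) where I₊ = {i : [f_i,f_i] ≥ 0}. Then the orthogonal projection P_{N(T)} onto the kernel of T commutes with P₊, i.e. P₊ P_{N(T)} = P_{N(T)} P₊. -/

import Mathlib

noncomputable section

open scoped Classical

open Function

/-- The indefinite inner product `[x,y] = ⟨Jx, y⟩` induced by an operator `J`. -/
def kre {E : Type*} [NormedAddCommGroup E] [InnerProductSpace ℂ E]
    (J : E →L[ℂ] E) (x y : E) : ℂ := @inner ℂ _ _ (J x) y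

/-- `J` is a fundamental symmetry: a selfadjoint unitary (involutive) operator. -/
def IsFundSym {E : Type*} [NormedAddCommGroup E] [InnerProductSpace ℂ E] [CompleteSpace E]
    (J : E →L[ℂ] E) : Prop :=
  IsSelfAdjoint J ∧ J.comp J = ContinuousLinearMap.id ℂ E

/-- The J-orthogonal companion of a subspace. -/
def JorthCompanion {E : Type*} [NormedAddCommGroup E] [InnerProductSpace ℂ E]
    (J : E →L[ℂ] E) (S : Submodule ℂ E) : Submodule ℂ E where
  carrier := {x | ∀ s ∈ S, kre J x s = 0}
  zero_mem' := by intro s hs; simp [kre]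
  add_mem' := by
    intro a b ha hb s hs
    have h1 := ha s hs
    have h2 := hb s hs
    simp only [kre, map_add, inner_add_left] at h1 h2 ⊢
    rw [h1, h2, add_zero]
  smul_mem' := by
    intro c x hx s hs
    have h1 := hx s hs
    simp only [kre, map_smul, inner_smul_left] at h1 ⊢
    rw [h1, mul_zero]

/-- Uniformly J-positive subspace. -/
def UnifJPos {E : Type*} [NormedAddCommGroup E] [InnerProductSpace ℂ E]
    (J : E →L[ℂ] E) (S : Submodule ℂ E) : Prop :=
  ∃ α : ℝ, 0 < α ∧ ∀ x ∈ S, α * ‖x‖ ^ 2 ≤ (kre J x x).re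

/-- Uniformly J-negative subspace. -/
def UnifJNeg {E : Type*} [NormedAddCommGroup E] [InnerProductSpace ℂ E]
    (J : E →L[ℂ] E) (S : Submodule ℂ E) : Prop :=
  ∃ α : ℝ, 0 < α ∧ ∀ x ∈ S, (kre J x x).re ≤ -(α * ‖x‖ ^ 2)

/-- Maximal uniformly J-positive subspace. -/
def MaxUnifJPos {E : Type*} [NormedAddCommGroup E] [InnerProductSpace ℂ E]
    (J : E →L[ℂ] E) (S : Submodule ℂ E) : Prop :=
  UnifJPos J S ∧ ∀ S' : Submodule ℂ E, UnifJPos J S' → S ≤ S' → S' = S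

/-- Maximal uniformly J-negative subspace. -/
def MaxUnifJNeg {E : Type*} [NormedAddCommGroup E] [InnerProductSpace ℂ E]
    (J : E →L[ℂ] E) (S : Submodule ℂ E) : Prop :=
  UnifJNeg J S ∧ ∀ S' : Submodule ℂ E, UnifJNeg J S' → S ≤ S' → S' = S

/-- J-selfadjoint operator (with respect to the indefinite inner product of `J`). -/
def IsJSelfAdj {E : Type*} [NormedAddCommGroup E] [InnerProductSpace ℂ E]
    (J : E →L[ℂ] E) (A : E →L[ℂ] E) : Prop :=
  ∀ x y : E, kre J (A x) y = kre J x (A y)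

/-- The J-order: `A ≤_J B` iff `B - A` is J-positive. -/
def JLe {E : Type*} [NormedAddCommGroup E] [InnerProductSpace ℂ E]
    (J : E →L[ℂ] E) (A B : E →L[ℂ] E) : Prop :=
  ∀ x : E, 0 ≤ (kre J (B x - A x) x).re ∧ (kre J (B x - A x) x).im = 0

/-- The subspace of `ℓ²(I)` supported on a subset (given by a predicate) of `I`. -/
def suppSub {I : Type*} (A : I → Prop) : Submodule ℂ (lp (fun _ : I => ℂ) 2) where
  carrier := {x | ∀ i, ¬ A i → x i = 0}
  zero_mem' := by intro i _; rfl
  add_mem' := by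
    intro a b ha hb i hi
    have : (↑(a + b) : ∀ i, ℂ) i = a i + b i := by
      rw [lp.coeFn_add]; rfl
    simp [this, ha i hi, hb i hi]
  smul_mem' := by
    intro c x hx i hi
    have : (↑(c • x) : ∀ i, ℂ) i = c • x i := by
      rw [lp.coeFn_smul]; rfl
    simp [this, hx i hi]

variable {H : Type*} [NormedAddCommGroup H] [InnerProductSpace ℂ H] [CompleteSpace H]
variable {I : Type*} [DecidableEq I]

/-- `i` is a "positive index" for the family `f` w.r.t. `J`: `[f i, f i] ≥ 0`. -/
def posIdx {H : Type*} [NormedAddCommGroup H] [InnerProductSpace ℂ H]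
    (J : H →L[ℂ] H) (f : I → H) (i : I) : Prop := 0 ≤ (kre J (f i) (f i)).re

/-- The sign `σ_i = sgn [f i, f i]` (as a complex scalar, `+1` on `I₊` and `-1` on `I₋`). -/
def sgnv {H : Type*} [NormedAddCommGroup H] [InnerProductSpace ℂ H]
    (J : H →L[ℂ] H) (f : I → H) (i : I) : ℂ := if posIdx J f i then 1 else -1

/-- Closure of the span of the vectors of the family `h` with positive indices (signs taken
from the family `f`). -/
def posSpan {H : Type*} [NormedAddCommGroup H] [InnerProductSpace ℂ H]
    (J : H →L[ℂ] H) (f h : I → H) : Submodule ℂ H :=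
  (Submodule.span ℂ {x | ∃ i, posIdx J f i ∧ h i = x}).topologicalClosure

/-- Closure of the span of the vectors of the family `h` with negative indices. -/
def negSpan {H : Type*} [NormedAddCommGroup H] [InnerProductSpace ℂ H]
    (J : H →L[ℂ] H) (f h : I → H) : Submodule ℂ H :=
  (Submodule.span ℂ {x | ∃ i, ¬ posIdx J f i ∧ h i = x}).topologicalClosure

/-- A Bessel family in a Hilbert space. -/
def IsBessel {H : Type*} [NormedAddCommGroup H] [InnerProductSpace ℂ H]
    (g : I → H) : Prop :=
  ∃ β : ℝ, ∀ (x : H) (s : Finset I),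
    ∑ i ∈ s, ‖@inner ℂ _ _ (g i) x‖ ^ 2 ≤ β * ‖x‖ ^ 2

/-- `g` is a dual family for `f`: the signs coincide and the two indefinite
reconstruction formulas hold. -/
def IsDualFamily {H : Type*} [NormedAddCommGroup H] [InnerProductSpace ℂ H]
    (J : H →L[ℂ] H) (f g : I → H) : Prop :=
  (∀ i, Real.sign ((kre J (g i) (g i)).re) = Real.sign ((kre J (f i) (f i)).re)) ∧
  (∀ x : H, HasSum (fun i => (sgnv J f i * kre J x (f i)) • g i) x) ∧
  (∀ x : H, HasSum (fun i => (sgnv J f i * kre J x (g i)) • f i) x)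


/-- For a J-frame, the orthogonal projection onto `N(T)` commutes with `P₊`. -/
theorem jframe_kernelProj_comm
    (J : H →L[ℂ] H) (hJ : IsFundSym J) (f : I → H)
    (T : lp (fun _ : I => ℂ) 2 →L[ℂ] H)
    (hT : ∀ i, T (lp.single 2 i (1:ℂ)) = f i)
    (hTsurj : Function.Surjective T)
    (Pp Pm : lp (fun _ : I => ℂ) 2 →L[ℂ] lp (fun _ : I => ℂ) 2)
    (hPp : ∀ (x : lp (fun _ : I => ℂ) 2) (i : I), Pp x i = if posIdx J f i then x i else 0)
    (hPm : ∀ (x : lp (fun _ : I => ℂ) 2) (i : I), Pm x i = if posIdx J f i then 0 else x i)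
    (hJF : MaxUnifJPos J (LinearMap.range ((T.comp Pp : lp (fun _ : I => ℂ) 2 →L[ℂ] H) : lp (fun _ : I => ℂ) 2 →ₗ[ℂ] H)) ∧
      MaxUnifJNeg J (LinearMap.range ((T.comp Pm : lp (fun _ : I => ℂ) 2 →L[ℂ] H) : lp (fun _ : I => ℂ) 2 →ₗ[ℂ] H)))
    (PN : lp (fun _ : I => ℂ) 2 →L[ℂ] lp (fun _ : I => ℂ) 2)
    (hPN : ∀ x : lp (fun _ : I => ℂ) 2, PN x ∈ LinearMap.ker (T : lp (fun _ : I => ℂ) 2 →ₗ[ℂ] H) ∧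
      x - PN x ∈ (LinearMap.ker (T : lp (fun _ : I => ℂ) 2 →ₗ[ℂ] H) : Submodule ℂ (lp (fun _ : I => ℂ) 2))ᗮ) :
    Pp.comp PN = PN.comp Pp := by
  obtain ⟨⟨⟨α, hα, hpos⟩, _⟩, ⟨⟨β, hβ, hneg⟩, _⟩⟩ := hJF
  -- Pp + Pm = id
  have hPpm : ∀ x : lp (fun _ : I => ℂ) 2, Pp x + Pm x = x := by
    intro x
    apply lp.ext
    funext i
    have hc : (↑(Pp x + Pm x) : ∀ _ : I, ℂ) i = Pp x i + Pm x i := by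
      rw [lp.coeFn_add]; rfl
    rw [hc, hPp, hPm]
    by_cases h : posIdx J f i <;> simp [h]
  -- Pp preserves the kernel of T
  have hker : ∀ x : lp (fun _ : I => ℂ) 2, T x = 0 → T (Pp x) = 0 := by
    intro x hx
    set v := T (Pp x) with hv
    have hsum : T (Pp x) + T (Pm x) = 0 := by rw [← map_add, hPpm, hx]
    have hv1 : v ∈ LinearMap.range ((T.comp Pp : lp (fun _ : I => ℂ) 2 →L[ℂ] H) : lp (fun _ : I => ℂ) 2 →ₗ[ℂ] H) := ⟨x, rfl⟩
    have hv2 : v ∈ LinearMap.range ((T.comp Pm : lp (fun _ : I => ℂ) 2 →L[ℂ] H) : lp (fun _ : I => ℂ) 2 →ₗ[ℂ] H) := by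
      refine ⟨-x, ?_⟩
      have : T (Pp x) = -(T (Pm x)) := eq_neg_of_add_eq_zero_left hsum
      simp [ContinuousLinearMap.comp_apply, map_neg, hv, this]
    have h1 := hpos v hv1
    have h2 := hneg v hv2
    have h3 : ‖v‖ ^ 2 ≤ 0 := by
      nlinarith [mul_nonneg hα.le (sq_nonneg ‖v‖), mul_nonneg hβ.le (sq_nonneg ‖v‖)]
    have : ‖v‖ = 0 := pow_eq_zero_iff two_ne_zero |>.mp (le_antisymm h3 (sq_nonneg _))
    rw [hv] at this ⊢
    exact norm_eq_zero.mp this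
  -- Pp is selfadjoint
  have hsa : ∀ x y : lp (fun _ : I => ℂ) 2,
      (inner ℂ (Pp x) y : ℂ) = inner ℂ x (Pp y) := by
    intro x y
    rw [lp.inner_eq_tsum, lp.inner_eq_tsum]
    refine tsum_congr fun i => ?_
    rw [hPp, hPp]
    by_cases h : posIdx J f i <;> simp [h]
  set K : Submodule ℂ (lp (fun _ : I => ℂ) 2) := LinearMap.ker (T : lp (fun _ : I => ℂ) 2 →ₗ[ℂ] H) with hK
  -- uniqueness of the orthogonal decomposition
  have huniq : ∀ y a : lp (fun _ : I => ℂ) 2, a ∈ K → y - a ∈ Kᗮ → a = PN y := by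
    intro y a ha hya
    have h1 := (hPN y).1
    have h2 := (hPN y).2
    have hmem : a - PN y ∈ K ⊓ Kᗮ := by
      constructor
      · exact Submodule.sub_mem _ ha h1
      · have he : a - PN y = (y - PN y) - (y - a) := by abel
        rw [he]
        exact Submodule.sub_mem _ h2 hya
    rw [(Submodule.orthogonal_disjoint K).eq_bot] at hmem
    have := Submodule.mem_bot (R := ℂ) |>.mp hmem
    exact sub_eq_zero.mp this
  refine ContinuousLinearMap.ext fun x => ?_
  simp only [ContinuousLinearMap.comp_apply]
  refine huniq (Pp x) (Pp (PN x)) ?_ ?_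
  · exact LinearMap.mem_ker.mpr (hker (PN x) (LinearMap.mem_ker.mp (hPN x).1))
  · rw [← map_sub]
    intro u hu
    calc (inner ℂ u (Pp (x - PN x)) : ℂ) = inner ℂ (Pp u) (x - PN x) := (hsa u _).symm
      _ = 0 := (hPN x).2 (Pp u) (LinearMap.mem_ker.mpr (hker u (LinearMap.mem_ker.mp hu)))
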